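/- Let β > 0, κ > 0 be real and let d, g ∈ ℂ with |d| = 1. Let W₁, W₂ be i.i.d. standard real Gaussian N(0,1) random variables, set n = (1/√2)(W₁ + iW₂), and define the Rician channel h = √β·(√(κ/(κ+1))·d + √(1/(κ+1))·n). Set ξ = |√(2κ)·d + √(2(κ+1)/β)·g|², which equals 2κ + (2(κ+1)/β)|g|² + 4√(κ(κ+1)/β)·Re(conj(d)·g). Then the law of the random variable (2(κ+1)/β)·|h + g|² equals the law of (√ξ + V₁)² + V₂², where V₁, V₂ are i.i.d. standard real Gaussian N(0,1). -/

import Mathlib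

open MeasureTheory ProbabilityTheory Complex

noncomputable def stdGauss2 : Measure (ℝ × ℝ) :=
  (gaussianReal 0 1).prod (gaussianReal 0 1)

lemma stdGauss2_eq_withDensity :
    stdGauss2 = volume.withDensity (fun p => gaussianPDF 0 1 p.1 * gaussianPDF 0 1 p.2) := by
  have h1 : gaussianReal 0 1 = volume.withDensity (gaussianPDF 0 1) :=
    gaussianReal_of_var_ne_zero 0 one_ne_zero
  rw [stdGauss2]
  refine (Measure.prod_eq fun s t hs ht => ?_)
  rw [withDensity_apply _ (hs.prod ht), Measure.volume_eq_prod, ← Measure.prod_restrict,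
    lintegral_prod_mul (measurable_gaussianPDF 0 1).aemeasurable
      (measurable_gaussianPDF 0 1).aemeasurable,
    h1, withDensity_apply _ hs, withDensity_apply _ ht]

noncomputable def rotMap (c s : ℝ) : (ℝ × ℝ) →ₗ[ℝ] (ℝ × ℝ) :=
  Matrix.toLin (Module.Basis.finTwoProd ℝ) (Module.Basis.finTwoProd ℝ) !![c, -s; s, c]

lemma rotMap_apply (c s : ℝ) (p : ℝ × ℝ) :
    rotMap c s p = (c * p.1 + -s * p.2, s * p.1 + c * p.2) :=
  Matrix.toLin_finTwoProd_apply c (-s) s c p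

lemma rotMap_det (c s : ℝ) (hcs : c ^ 2 + s ^ 2 = 1) : LinearMap.det (rotMap c s) = 1 := by
  rw [rotMap, LinearMap.det_toLin, Matrix.det_fin_two_of]
  nlinarith

lemma rotMap_measurePreserving (c s : ℝ) (hcs : c ^ 2 + s ^ 2 = 1) :
    MeasurePreserving (rotMap c s) (volume : Measure (ℝ × ℝ)) volume := by
  have hdet : LinearMap.det (rotMap c s) ≠ 0 := by rw [rotMap_det c s hcs]; norm_num
  refine ⟨(rotMap c s).continuous_of_finiteDimensional.measurable, ?_⟩
  rw [Measure.map_linearMap_addHaar_eq_smul_addHaar volume hdet, rotMap_det c s hcs]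
  simp

lemma gaussianPDF_prod_eq (x y x' y' : ℝ) (hxy : x ^ 2 + y ^ 2 = x' ^ 2 + y' ^ 2) :
    gaussianPDF 0 1 x * gaussianPDF 0 1 y = gaussianPDF 0 1 x' * gaussianPDF 0 1 y' := by
  rw [gaussianPDF, gaussianPDF, gaussianPDF, gaussianPDF,
    ← ENNReal.ofReal_mul (gaussianPDFReal_nonneg 0 1 x),
    ← ENNReal.ofReal_mul (gaussianPDFReal_nonneg 0 1 x')]
  congr 1
  simp only [gaussianPDFReal, NNReal.coe_one, mul_one, sub_zero]
  rw [mul_mul_mul_comm, ← Real.exp_add, mul_mul_mul_comm, ← Real.exp_add]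
  have he : -x ^ 2 / (2 * 1) + -y ^ 2 / (2 * 1) = -x' ^ 2 / (2 * 1) + -y' ^ 2 / (2 * 1) := by
    field_simp; linarith
  congr 1
  ring_nf
  ring_nf at he
  rw [he]

lemma stdGauss2_rot_invariant (c s : ℝ) (hcs : c ^ 2 + s ^ 2 = 1) :
    Measure.map (rotMap c s) stdGauss2 = stdGauss2 := by
  have hmp := rotMap_measurePreserving c s hcs
  have hmeas := (rotMap c s).continuous_of_finiteDimensional.measurable
  have hfRf : ∀ p : ℝ × ℝ,
      gaussianPDF 0 1 (rotMap c s p).1 * gaussianPDF 0 1 (rotMap c s p).2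
        = gaussianPDF 0 1 p.1 * gaussianPDF 0 1 p.2 := by
    intro p
    apply gaussianPDF_prod_eq
    rw [rotMap_apply]
    dsimp only
    nlinarith [hcs]
  ext t ht
  rw [Measure.map_apply hmeas ht, stdGauss2_eq_withDensity,
    withDensity_apply _ (hmeas ht), withDensity_apply _ ht]
  calc ∫⁻ p in (rotMap c s) ⁻¹' t, gaussianPDF 0 1 p.1 * gaussianPDF 0 1 p.2 ∂volume
      = ∫⁻ p in (rotMap c s) ⁻¹' t,
          gaussianPDF 0 1 (rotMap c s p).1 * gaussianPDF 0 1 (rotMap c s p).2 ∂volume := by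
        refine setLIntegral_congr_fun (hmeas ht) (fun p _ => (hfRf p).symm)
    _ = ∫⁻ q in t, gaussianPDF 0 1 q.1 * gaussianPDF 0 1 q.2 ∂volume := by
        have hFm : Measurable (fun q : ℝ × ℝ => gaussianPDF 0 1 q.1 * gaussianPDF 0 1 q.2) := ((measurable_gaussianPDF 0 1).comp measurable_fst).mul
          ((measurable_gaussianPDF 0 1).comp measurable_snd)
        exact hmp.setLIntegral_comp_preimage ht hFm

lemma key_map (a : ℂ) :
    Measure.map (fun p : ℝ × ℝ => (a.re + p.1) ^ 2 + (a.im + p.2) ^ 2) stdGauss2 =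
      Measure.map (fun p : ℝ × ℝ => (‖a‖ + p.1) ^ 2 + p.2 ^ 2) stdGauss2 := by
  rcases eq_or_ne a 0 with rfl | ha
  · simp
  · set r := ‖a‖ with hr
    have hr0 : 0 < r := norm_pos_iff.mpr ha
    set c := a.re / r with hc
    set s := a.im / r with hs
    have hre : a.re = r * c := by rw [hc]; field_simp
    have him : a.im = r * s := by rw [hs]; field_simp
    have hn : a.re ^ 2 + a.im ^ 2 = r ^ 2 := by
      rw [hr, Complex.sq_norm, Complex.normSq_apply]; ring
    have hcs : c ^ 2 + s ^ 2 = 1 := by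
      rw [hc, hs, div_pow, div_pow, ← add_div]
      rw [hn]
      field_simp
    have hrot := stdGauss2_rot_invariant c s hcs
    have hmeasR := (rotMap c s).continuous_of_finiteDimensional.measurable
    have hFm : Measurable (fun p : ℝ × ℝ => (a.re + p.1) ^ 2 + (a.im + p.2) ^ 2) := by
      fun_prop
    calc Measure.map (fun p : ℝ × ℝ => (a.re + p.1) ^ 2 + (a.im + p.2) ^ 2) stdGauss2
        = Measure.map (fun p : ℝ × ℝ => (a.re + p.1) ^ 2 + (a.im + p.2) ^ 2)
            (Measure.map (rotMap c s) stdGauss2) := by rw [hrot]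
      _ = Measure.map ((fun p : ℝ × ℝ => (a.re + p.1) ^ 2 + (a.im + p.2) ^ 2) ∘ rotMap c s)
            stdGauss2 := Measure.map_map hFm hmeasR
      _ = Measure.map (fun p : ℝ × ℝ => (r + p.1) ^ 2 + p.2 ^ 2) stdGauss2 := by
          congr 1
          funext p
          simp only [Function.comp_apply, rotMap_apply]
          rw [hre, him]
          linear_combination ((r + p.1) ^ 2 + p.2 ^ 2) * hcs

lemma map_pair {Ω : Type*} [MeasureSpace Ω] [IsProbabilityMeasure (ℙ : Measure Ω)]
    (X Y : Ω → ℝ) (hX : Measure.map X ℙ = gaussianReal 0 1)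
    (hY : Measure.map Y ℙ = gaussianReal 0 1) (hindep : IndepFun X Y ℙ) :
    Measure.map (fun ω => (X ω, Y ω)) ℙ = stdGauss2 := by
  have hXm : AEMeasurable X ℙ := aemeasurable_of_map_neZero (by rw [hX]; infer_instance)
  have hYm : AEMeasurable Y ℙ := aemeasurable_of_map_neZero (by rw [hY]; infer_instance)
  rw [(indepFun_iff_map_prod_eq_prod_map_map hXm hYm).mp hindep, hX, hY, stdGauss2]

/-- Lemma 1 of the paper: for the Rician channel
`h = √β (√(κ/(κ+1)) d + √(1/(κ+1)) n)` with `n = (W₁ + i W₂)/√2`, `W₁, W₂` i.i.d.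
standard Gaussians, and a deterministic reflected channel `g`, the scaled squared
magnitude `(2(κ+1)/β) |h + g|²` is distributed as `(√ξ + V₁)² + V₂²`
(a non-central chi-squared with 2 degrees of freedom), where
`ξ = |√(2κ) d + √(2(κ+1)/β) g|²`. -/
theorem stmt_2
    {Ω Ω' : Type*} [MeasureSpace Ω] [MeasureSpace Ω']
    [IsProbabilityMeasure (ℙ : Measure Ω)] [IsProbabilityMeasure (ℙ : Measure Ω')]
    (β κ : ℝ) (hβ : 0 < β) (hκ : 0 < κ) (d g : ℂ) (hd : ‖d‖ = 1)
    (W₁ W₂ : Ω → ℝ) (V₁ V₂ : Ω' → ℝ)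
    (hW₁ : Measure.map W₁ ℙ = gaussianReal 0 1)
    (hW₂ : Measure.map W₂ ℙ = gaussianReal 0 1)
    (hWindep : IndepFun W₁ W₂ ℙ)
    (hV₁ : Measure.map V₁ ℙ = gaussianReal 0 1)
    (hV₂ : Measure.map V₂ ℙ = gaussianReal 0 1)
    (hVindep : IndepFun V₁ V₂ ℙ)
    (n : Ω → ℂ) (hn : ∀ ω, n ω = (1 / (Real.sqrt 2 : ℂ)) * (W₁ ω + W₂ ω * I))
    (h : Ω → ℂ)
    (hh : ∀ ω, h ω = (Real.sqrt β : ℂ) *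
      ((Real.sqrt (κ / (κ + 1)) : ℂ) * d + (Real.sqrt (1 / (κ + 1)) : ℂ) * n ω))
    (ξ : ℝ)
    (hξ : ξ = ‖(Real.sqrt (2 * κ) : ℂ) * d
      + (Real.sqrt (2 * (κ + 1) / β) : ℂ) * g‖^2) :
    ξ = 2 * κ + (2 * (κ + 1) / β) * ‖g‖^2
        + 4 * Real.sqrt (κ * (κ + 1) / β) * (starRingEnd ℂ d * g).re ∧
    Measure.map (fun ω => (2 * (κ + 1) / β) * ‖h ω + g‖^2) ℙ =
      Measure.map (fun ω => (Real.sqrt ξ + V₁ ω)^2 + (V₂ ω)^2) ℙ := by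
  have hβ' : β ≠ 0 := ne_of_gt hβ
  have hκ1 : (0:ℝ) < κ + 1 := by linarith
  set t : ℝ := 2 * (κ + 1) / β with htdef
  have ht0 : 0 < t := by positivity
  set a : ℂ := (Real.sqrt (2 * κ) : ℂ) * d + (Real.sqrt t : ℂ) * g with hadef
  -- √ξ = |a|
  have habs : Real.sqrt ξ = ‖a‖ := by
    rw [hξ]; exact Real.sqrt_sq (norm_nonneg a)
  -- Part 1
  have hξ' : ξ = 2 * κ + t * ‖g‖^2
      + 4 * Real.sqrt (κ * (κ + 1) / β) * (starRingEnd ℂ d * g).re := by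
    rw [hξ, Complex.sq_norm, Complex.normSq_add]
    have h1 : Complex.normSq ((Real.sqrt (2 * κ) : ℂ) * d) = 2 * κ := by
      rw [Complex.normSq_mul, Complex.normSq_ofReal, ← Complex.sq_norm d, hd,
        Real.mul_self_sqrt (by positivity : (0:ℝ) ≤ 2 * κ)]
      norm_num
    have h2 : Complex.normSq ((Real.sqrt t : ℂ) * g) = t * ‖g‖^2 := by
      rw [Complex.normSq_mul, Complex.normSq_ofReal, Real.mul_self_sqrt ht0.le,
        Complex.normSq_eq_norm_sq]
    have h3 : (((Real.sqrt (2 * κ) : ℂ) * d)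
        * (starRingEnd ℂ ((Real.sqrt t : ℂ) * g))).re
        = Real.sqrt (2 * κ) * Real.sqrt t * (starRingEnd ℂ d * g).re := by
      simp only [map_mul, Complex.conj_ofReal, Complex.mul_re, Complex.mul_im,
        Complex.ofReal_re, Complex.ofReal_im, Complex.conj_re, Complex.conj_im]
      ring
    have h4 : Real.sqrt (2 * κ) * Real.sqrt t = 2 * Real.sqrt (κ * (κ + 1) / β) := by
      rw [← Real.sqrt_mul (by positivity : (0:ℝ) ≤ 2 * κ),
        show 2 * κ * t = 2 ^ 2 * (κ * (κ + 1) / β) by rw [htdef]; field_simp,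
        Real.sqrt_mul (by positivity : (0:ℝ) ≤ (2:ℝ)^2),
        Real.sqrt_sq (by norm_num : (0:ℝ) ≤ 2)]
    rw [h1, h2, h3, h4]
    ring
  refine ⟨hξ', ?_⟩
  -- Part 2
  have hW₁m : AEMeasurable W₁ ℙ := aemeasurable_of_map_neZero (by rw [hW₁]; infer_instance)
  have hW₂m : AEMeasurable W₂ ℙ := aemeasurable_of_map_neZero (by rw [hW₂]; infer_instance)
  have hV₁m : AEMeasurable V₁ ℙ := aemeasurable_of_map_neZero (by rw [hV₁]; infer_instance)
  have hV₂m : AEMeasurable V₂ ℙ := aemeasurable_of_map_neZero (by rw [hV₂]; infer_instance)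
  have hpairW := map_pair W₁ W₂ hW₁ hW₂ hWindep
  have hpairV := map_pair V₁ V₂ hV₁ hV₂ hVindep
  have hFm : Measurable (fun p : ℝ × ℝ => (a.re + p.1)^2 + (a.im + p.2)^2) := by fun_prop
  have hGm : Measurable (fun p : ℝ × ℝ => (Real.sqrt ξ + p.1)^2 + p.2^2) := by fun_prop
  -- pointwise identity for the LHS
  have h2ne : (Real.sqrt 2 : ℂ) ≠ 0 := by
    simp [Real.sqrt_eq_zero']
  have hz : ∀ ω, (Real.sqrt t : ℂ) * (h ω + g) = a + (W₁ ω + W₂ ω * I) := by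
    intro ω
    rw [hh ω, hn ω]
    have e1 : Real.sqrt t * Real.sqrt β * Real.sqrt (κ / (κ + 1)) = Real.sqrt (2 * κ) := by
      rw [← Real.sqrt_mul ht0.le, ← Real.sqrt_mul (by positivity : (0:ℝ) ≤ t * β)]
      congr 1
      rw [htdef]; field_simp
    have e2 : Real.sqrt t * Real.sqrt β * Real.sqrt (1 / (κ + 1)) * (Real.sqrt 2)⁻¹ = 1 := by
      rw [← Real.sqrt_inv, ← Real.sqrt_mul ht0.le, ← Real.sqrt_mul (by positivity : (0:ℝ) ≤ t * β),
        ← Real.sqrt_mul (by positivity : (0:ℝ) ≤ t * β * (1 / (κ + 1)))]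
      rw [show t * β * (1 / (κ + 1)) * 2⁻¹ = 1 by rw [htdef]; field_simp]
      exact Real.sqrt_one
    have e1' : (Real.sqrt t : ℂ) * (Real.sqrt β : ℂ) * (Real.sqrt (κ / (κ + 1)) : ℂ)
        = (Real.sqrt (2 * κ) : ℂ) := by
      rw [← Complex.ofReal_mul, ← Complex.ofReal_mul, e1]
    have e2' : (Real.sqrt t : ℂ) * (Real.sqrt β : ℂ) * (Real.sqrt (1 / (κ + 1)) : ℂ)
        * ((Real.sqrt 2 : ℂ))⁻¹ = 1 := by
      rw [← Complex.ofReal_inv, ← Complex.ofReal_mul, ← Complex.ofReal_mul,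
        ← Complex.ofReal_mul, e2, Complex.ofReal_one]
    rw [hadef]
    linear_combination d * e1' + ((W₁ ω : ℂ) + (W₂ ω : ℂ) * I) * e2'
  have hp : ∀ ω, t * ‖h ω + g‖^2 = (a.re + W₁ ω)^2 + (a.im + W₂ ω)^2 := by
    intro ω
    have : t * ‖h ω + g‖^2
        = ‖(Real.sqrt t : ℂ) * (h ω + g)‖^2 := by
      rw [norm_mul, mul_pow, Complex.norm_real, Real.norm_eq_abs, _root_.sq_abs, Real.sq_sqrt ht0.le]
    rw [this, hz ω, Complex.sq_norm, Complex.normSq_apply]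
    simp [Complex.add_re, Complex.add_im]
    ring
  calc Measure.map (fun ω => t * ‖h ω + g‖^2) ℙ
      = Measure.map ((fun p : ℝ × ℝ => (a.re + p.1)^2 + (a.im + p.2)^2)
          ∘ (fun ω => (W₁ ω, W₂ ω))) ℙ := by
        congr 1; funext ω; exact hp ω
    _ = Measure.map (fun p : ℝ × ℝ => (a.re + p.1)^2 + (a.im + p.2)^2)
          (Measure.map (fun ω => (W₁ ω, W₂ ω)) ℙ) :=
        (AEMeasurable.map_map_of_aemeasurable
          (by exact hFm.aemeasurable) (hW₁m.prodMk hW₂m)).symm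
    _ = Measure.map (fun p : ℝ × ℝ => (‖a‖ + p.1)^2 + p.2^2) stdGauss2 := by
        rw [hpairW, key_map a]
    _ = Measure.map (fun p : ℝ × ℝ => (Real.sqrt ξ + p.1)^2 + p.2^2)
          (Measure.map (fun ω => (V₁ ω, V₂ ω)) ℙ) := by rw [hpairV, habs]
    _ = Measure.map (fun ω => (Real.sqrt ξ + V₁ ω)^2 + (V₂ ω)^2) ℙ :=
        AEMeasurable.map_map_of_aemeasurable
          (by exact hGm.aemeasurable) (hV₁m.prodMk hV₂m)
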